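/- Fix a real q > 1 and natural numbers m < n. Let f : ℕ → ℝ. If Σ_{k=m+1}^{n} (q^k − q^{k−1})·f(k)·(Dη)(k) = 0 for every function η : ℕ → ℝ with η(m) = η(n) = 0, then there exists c ∈ ℝ such that f(k) = c for all k with m + 1 ≤ k ≤ n. -/

import Mathlib

/-- The nabla derivative on the time scale `q^ℕ₀` (encoded by indices `k ∈ ℕ`):
`(Df)(k) = (f(k) − f(k−1)) / (q^k − q^{k−1})`. -/
noncomputable def qNabla (q : ℝ) (f : ℕ → ℝ) : ℕ → ℝ :=
  fun k => (f k - f (k - 1)) / (q ^ k - q ^ (k - 1))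

/-- Fundamental constancy lemma of the nabla calculus of variations on the q-scale:
if `Σ_{k=m+1}^{n} (q^k − q^{k−1})·f(k)·(Dη)(k) = 0` for every `η : ℕ → ℝ` with
`η(m) = η(n) = 0`, then `f` is constant on `{m+1, …, n}`. -/
theorem fundamental_lemma_constancy_qscale (q : ℝ) (hq : 1 < q) (m n : ℕ) (hmn : m < n)
    (f : ℕ → ℝ)
    (h : ∀ η : ℕ → ℝ, η m = 0 → η n = 0 →
      ∑ k ∈ Finset.Icc (m + 1) n, (q ^ k - q ^ (k - 1)) * f k * qNabla q η k = 0) :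
    ∃ c : ℝ, ∀ k : ℕ, m + 1 ≤ k → k ≤ n → f k = c := by
  refine ⟨f n, fun j hj1 hj2 => ?_⟩
  rcases eq_or_lt_of_le hj2 with rfl | hjn
  · rfl
  set η : ℕ → ℝ := fun k => if j ≤ k ∧ k < n then 1 else 0 with hη
  have hηm : η m = 0 := by simp only [hη]; rw [if_neg]; omega
  have hηn : η n = 0 := by simp only [hη]; rw [if_neg]; omega
  have hsum := h η hηm hηn
  have key : ∀ k ∈ Finset.Icc (m+1) n,
      (q ^ k - q ^ (k - 1)) * f k * qNabla q η k = f k * (η k - η (k-1)) := by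
    intro k hk
    simp only [Finset.mem_Icc] at hk
    have hk1 : 1 ≤ k := by omega
    have hlt : q ^ (k-1) < q ^ k := pow_lt_pow_right₀ hq (by omega)
    have hne : q ^ k - q ^ (k-1) ≠ 0 := by linarith
    simp only [qNabla]
    field_simp
  rw [Finset.sum_congr rfl key] at hsum
  have hsub : ({j, n} : Finset ℕ) ⊆ Finset.Icc (m+1) n := by
    intro x hx
    simp only [Finset.mem_insert, Finset.mem_singleton] at hx
    simp only [Finset.mem_Icc]
    omega
  rw [← Finset.sum_subset hsub ?_] at hsum
  · rw [Finset.sum_pair (by omega : j ≠ n)] at hsum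
    have h1 : η j = 1 := by simp only [hη]; rw [if_pos]; omega
    have h2 : η (j-1) = 0 := by simp only [hη]; rw [if_neg]; omega
    have h3 : η (n-1) = 1 := by simp only [hη]; rw [if_pos]; omega
    rw [h1, h2, h3, hηn] at hsum
    linarith
  · intro k hk hk'
    simp only [Finset.mem_Icc] at hk
    simp only [Finset.mem_insert, Finset.mem_singleton, not_or] at hk'
    have : η k = η (k-1) := by
      simp only [hη]
      by_cases hc : j ≤ k ∧ k < n
      · rw [if_pos hc, if_pos (by omega)]
      · rw [if_neg hc, if_neg (by omega)]
    rw [this]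
    ring
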